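/- arXiv:2412.17908 — 3 statements merged into one kernel-verified Lean document; each statement's English description precedes it below -/
import Mathlib

section
/- (Black–Scholes call price formula.) Let S₀ > 0, K > 0, σ > 0, T > 0, r ∈ ℝ. Then e^{−rT} · (1/√(2π)) ∫_{−∞}^{∞} max(S₀·exp(σ y √T + (r − σ²/2) T) − K, 0) · e^{−y²/2} dy = S₀ Φ(d₊) − K e^{−rT} Φ(d₋), where d₊ = (log(S₀/K) + T(r + σ²/2))/(σ√T) and d₋ = d₊ − σ√T = (log(S₀/K) + T(r − σ²/2))/(σ√T). -/
open MeasureTheory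

/-- The standard normal cumulative distribution function
`Φ(y) = (1/√(2π)) ∫_{-∞}^{y} e^{-z²/2} dz`. -/
noncomputable def stdNormalCDF (y : ℝ) : ℝ :=
  (Real.sqrt (2 * Real.pi))⁻¹ * ∫ z in Set.Iio y, Real.exp (-(z ^ 2) / 2)

lemma bs_gauss_integrable : Integrable (fun y : ℝ => Real.exp (-(y ^ 2) / 2)) := by
  have h := integrable_exp_neg_mul_sq (show (0:ℝ) < 1/2 by norm_num)
  exact h.congr (Filter.Eventually.of_forall fun x => congrArg Real.exp (by ring))

lemma bs_shift (f : ℝ → ℝ) (c d : ℝ) :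
    ∫ y in Set.Ioi c, f (y - d) = ∫ z in Set.Ioi (c - d), f z := by
  rw [← integral_indicator measurableSet_Ioi, ← integral_indicator measurableSet_Ioi,
    ← integral_sub_right_eq_self ((Set.Ioi (c - d)).indicator f) d]
  congr 1
  ext y
  by_cases h : y ∈ Set.Ioi c
  · rw [Set.indicator_of_mem h, Set.indicator_of_mem]
    exact sub_lt_sub_right h d
  · rw [Set.indicator_of_notMem h, Set.indicator_of_notMem]
    intro hy
    exact h (by simpa using sub_lt_sub_right hy (-d))

lemma bs_reflect (c : ℝ) :
    ∫ y in Set.Ioi c, Real.exp (-(y ^ 2) / 2)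
      = ∫ y in Set.Iio (-c), Real.exp (-(y ^ 2) / 2) := by
  rw [← integral_Iic_eq_integral_Iio, ← integral_comp_neg_Ioi]
  congr 1
  ext y
  norm_num

/-- The Black–Scholes call price formula: the discounted Gaussian expectation of the
call payoff `(S_T − K)⁺` equals `S₀ Φ(d₊) − K e^{−rT} Φ(d₋)`, where
`d₊ = (log(S₀/K) + T(r + σ²/2))/(σ√T)` and `d₋ = d₊ − σ√T`. -/
theorem black_scholes_call_price (S₀ K σ T r : ℝ)
    (hS : 0 < S₀) (hK : 0 < K) (hσ : 0 < σ) (hT : 0 < T) :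
    (Real.exp (-(r * T)) * ((Real.sqrt (2 * Real.pi))⁻¹ *
        ∫ y : ℝ, max (S₀ * Real.exp (σ * y * Real.sqrt T + (r - σ ^ 2 / 2) * T) - K) 0 *
          Real.exp (-(y ^ 2) / 2)) =
      S₀ * stdNormalCDF ((Real.log (S₀ / K) + T * (r + σ ^ 2 / 2)) / (σ * Real.sqrt T)) -
        K * Real.exp (-(r * T)) *
          stdNormalCDF ((Real.log (S₀ / K) + T * (r - σ ^ 2 / 2)) / (σ * Real.sqrt T))) ∧
    ((Real.log (S₀ / K) + T * (r + σ ^ 2 / 2)) / (σ * Real.sqrt T) - σ * Real.sqrt T =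
      (Real.log (S₀ / K) + T * (r - σ ^ 2 / 2)) / (σ * Real.sqrt T)) := by
  have hsT : 0 < Real.sqrt T := Real.sqrt_pos.mpr hT
  have hsq : Real.sqrt T ^ 2 = T := Real.sq_sqrt hT.le
  set a : ℝ := σ * Real.sqrt T with ha_def
  have ha : 0 < a := mul_pos hσ hsT
  set m : ℝ := (r - σ ^ 2 / 2) * T with hm_def
  set c : ℝ := (Real.log (K / S₀) - m) / a with hc_def
  set dp : ℝ := (Real.log (S₀ / K) + T * (r + σ ^ 2 / 2)) / (σ * Real.sqrt T) with hdp_def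
  set dm : ℝ := (Real.log (S₀ / K) + T * (r - σ ^ 2 / 2)) / (σ * Real.sqrt T) with hdm_def
  have hd2 : dp - a = dm := by
    rw [hdp_def, hdm_def, ← ha_def]
    field_simp
    nlinarith [hsq]
  have hnegc : -c = dm := by
    rw [hc_def, hdm_def, ← ha_def, neg_div', neg_sub]
    congr 1
    rw [Real.log_div hK.ne' hS.ne', Real.log_div hS.ne' hK.ne', hm_def]
    ring
  have hac : a - c = dp := by linarith [hd2, hnegc]
  refine ⟨?_, hd2⟩
  -- abbreviation for the Gaussian density
  set g : ℝ → ℝ := fun y => Real.exp (-(y ^ 2) / 2) with hg_def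
  -- step 1: rewrite the integrand as an indicator
  have hind : (fun y : ℝ => max (S₀ * Real.exp (σ * y * Real.sqrt T + (r - σ ^ 2 / 2) * T) - K) 0
      * g y)
      = (Set.Ioi c).indicator (fun y => (S₀ * Real.exp (a * y + m) - K) * g y) := by
    funext y
    have hexp : σ * y * Real.sqrt T + (r - σ ^ 2 / 2) * T = a * y + m := by
      rw [ha_def, hm_def]; ring
    rw [hexp]
    by_cases h : y ∈ Set.Ioi c
    · rw [Set.indicator_of_mem h]
      congr 1
      have hcy : Real.log (K / S₀) - m < y * a := (div_lt_iff₀ ha).mp h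
      have : Real.log (K / S₀) < a * y + m := by linarith [hcy]
      have hKS : K / S₀ < Real.exp (a * y + m) :=
        (Real.log_lt_iff_lt_exp (div_pos hK hS)).mp this
      have : K < S₀ * Real.exp (a * y + m) := by
        rw [div_lt_iff₀ hS] at hKS; linarith [hKS]
      exact max_eq_left (by linarith)
    · rw [Set.indicator_of_notMem h]
      have hyc : y ≤ c := le_of_not_gt h
      have : y * a ≤ Real.log (K / S₀) - m := by
        rw [hc_def] at hyc
        exact (le_div_iff₀ ha).mp hyc
      have hle : a * y + m ≤ Real.log (K / S₀) := by linarith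
      have : Real.exp (a * y + m) ≤ K / S₀ := by
        rw [← Real.exp_log (div_pos hK hS)]
        exact Real.exp_le_exp.mpr hle
      have : S₀ * Real.exp (a * y + m) ≤ K := by
        rw [le_div_iff₀ hS] at this; linarith
      rw [max_eq_right (by linarith), zero_mul]
  -- rewrite the exponential product
  have hprod : ∀ y : ℝ, Real.exp (a * y + m) * g y
      = Real.exp (m + a ^ 2 / 2) * g (y - a) := by
    intro y
    rw [hg_def]
    simp only [← Real.exp_add]
    exact congrArg Real.exp (by ring)
  have hrT : m + a ^ 2 / 2 = r * T := by
    rw [hm_def, ha_def, mul_pow, hsq]; ring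
  -- integrability
  have hg_int : Integrable g := bs_gauss_integrable
  have hshift_int : Integrable (fun y : ℝ => g (y - a)) := hg_int.comp_sub_right a
  have hI1 : IntegrableOn (fun y => S₀ * Real.exp (a * y + m) * g y) (Set.Ioi c) := by
    have : Integrable (fun y : ℝ => S₀ * Real.exp (a * y + m) * g y) := by
      have := (hshift_int.const_mul (S₀ * Real.exp (m + a ^ 2 / 2)))
      refine this.congr (Filter.Eventually.of_forall fun y => ?_)
      dsimp only
      rw [mul_assoc, ← hprod y]; ring
    exact this.integrableOn
  have hI2 : IntegrableOn (fun y => K * g y) (Set.Ioi c) :=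
    (hg_int.const_mul K).integrableOn
  -- main computation
  have key : (∫ y : ℝ, max (S₀ * Real.exp (σ * y * Real.sqrt T + (r - σ ^ 2 / 2) * T) - K) 0
      * g y)
      = S₀ * Real.exp (r * T) * (∫ z in Set.Iio dp, Real.exp (-(z ^ 2) / 2))
        - K * ∫ z in Set.Iio dm, Real.exp (-(z ^ 2) / 2) := by
    rw [hind, integral_indicator measurableSet_Ioi]
    have hsplit : ∀ y : ℝ, (S₀ * Real.exp (a * y + m) - K) * g y
        = S₀ * Real.exp (a * y + m) * g y - K * g y := fun y => by ring
    simp only [hsplit]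
    rw [integral_sub hI1 hI2]
    have h1 : (∫ y in Set.Ioi c, S₀ * Real.exp (a * y + m) * g y)
        = S₀ * Real.exp (r * T) * ∫ z in Set.Iio dp, Real.exp (-(z ^ 2) / 2) := by
      have : (fun y => S₀ * Real.exp (a * y + m) * g y)
          = fun y => S₀ * Real.exp (m + a ^ 2 / 2) * g (y - a) := by
        funext y; rw [mul_assoc, hprod y]; ring
      rw [this]
      rw [integral_const_mul, bs_shift g c a, hg_def, bs_reflect (c - a), neg_sub, hac, hrT]
    have h2 : (∫ y in Set.Ioi c, K * g y)
        = K * ∫ z in Set.Iio dm, Real.exp (-(z ^ 2) / 2) := by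
      rw [integral_const_mul, hg_def, bs_reflect c, hnegc]
    simp only [h1, h2]
  rw [key, stdNormalCDF, stdNormalCDF]
  have hE : Real.exp (-(r * T)) * Real.exp (r * T) = 1 := by
    rw [← Real.exp_add]; simp
  set P := ∫ z in Set.Iio dp, Real.exp (-(z ^ 2) / 2)
  set Q := ∫ z in Set.Iio dm, Real.exp (-(z ^ 2) / 2)
  set s := (Real.sqrt (2 * Real.pi))⁻¹
  linear_combination s * S₀ * P * hE
end

section
/- (Black–Scholes delta / minimal hedge.) Let σ > 0, t > 0, K > 0, r ∈ ℝ, and define F(t,s) = (1/√(2π)) ∫_{−∞}^{∞} max(s·exp(σ y √t + (r − σ²/2) t) − K, 0) · e^{−y²/2} dy and y(t,s) = (1/(σ√t)) · (log(K/s) − (r − σ²/2) t) for s > 0. Then the map s ↦ F(t,s) is differentiable on (0,∞) and its derivative is ∂F/∂s (t,s) = e^{r t} Φ(σ√t − y(t,s)) = e^{r t} Φ((log(s/K) + t(r + σ²/2))/(σ√t)). -/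
open MeasureTheory

noncomputable def F (σ r K t s : ℝ) : ℝ :=
  (Real.sqrt (2 * Real.pi))⁻¹ *
    ∫ y : ℝ, max (s * Real.exp (σ * y * Real.sqrt t + (r - σ ^ 2 / 2) * t) - K) 0 *
      Real.exp (-(y ^ 2) / 2)

noncomputable def ycrit (σ r K t s : ℝ) : ℝ :=
  (σ * Real.sqrt t)⁻¹ * (Real.log (K / s) - (r - σ ^ 2 / 2) * t)

lemma integrable_gauss : Integrable (fun z : ℝ => Real.exp (-(z ^ 2) / 2)) := by
  have h := integrable_exp_neg_mul_sq (b := (1/2 : ℝ)) (by norm_num)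
  have e : (fun z : ℝ => Real.exp (-(z ^ 2) / 2)) = fun z => Real.exp (-(1/2) * z ^ 2) := by
    funext z; congr 1; ring
  rw [e]; exact h

lemma integrable_gauss_shift (m : ℝ) :
    Integrable (fun y : ℝ => Real.exp (-((m - y) ^ 2) / 2)) := by
  have e : (fun y : ℝ => Real.exp (-((m - y) ^ 2) / 2))
      = fun y => Real.exp (-((y - m) ^ 2) / 2) := by
    funext y; congr 1; ring
  rw [e]; exact integrable_gauss.comp_sub_right m

lemma gauss_shift_integral (m c : ℝ) :
    (∫ y in Set.Ioi c, Real.exp (-((m - y) ^ 2) / 2)) =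
      ∫ z in Set.Iio (m - c), Real.exp (-(z ^ 2) / 2) := by
  have hmp : MeasurePreserving (fun y : ℝ => m - y) volume volume :=
    Measure.measurePreserving_sub_left volume m
  have hemb : MeasurableEmbedding (fun y : ℝ => m - y) :=
    (Homeomorph.subLeft m).measurableEmbedding
  have h := hmp.setIntegral_preimage_emb hemb
    (fun z => Real.exp (-(z ^ 2) / 2)) (Set.Iio (m - c))
  rw [← h]
  congr 1
  ext y
  simp [sub_lt_sub_iff_left]

lemma ycrit_sol (σ t K r : ℝ) (hσ : 0 < σ) (ht : 0 < t) (hK : 0 < K) {s : ℝ} (hs : 0 < s) :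
    s * Real.exp (σ * ycrit σ r K t s * Real.sqrt t + (r - σ ^ 2 / 2) * t) = K := by
  have hm : (σ * Real.sqrt t) ≠ 0 := (mul_pos hσ (Real.sqrt_pos.mpr ht)).ne'
  have he : σ * ycrit σ r K t s * Real.sqrt t + (r - σ ^ 2 / 2) * t = Real.log (K / s) := by
    unfold ycrit
    field_simp
    ring
  rw [he, Real.exp_log (div_pos hK hs)]
  field_simp

lemma F_closed (σ t K r : ℝ) (hσ : 0 < σ) (ht : 0 < t) (hK : 0 < K) {s : ℝ} (hs : 0 < s) :
    F σ r K t s =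
      s * Real.exp (r * t) * stdNormalCDF (σ * Real.sqrt t - ycrit σ r K t s) -
        K * stdNormalCDF (-ycrit σ r K t s) := by
  set m := σ * Real.sqrt t with hm_def
  set yc := ycrit σ r K t s with hyc_def
  have hm : 0 < m := mul_pos hσ (Real.sqrt_pos.mpr ht)
  have hsq : Real.sqrt t ^ 2 = t := Real.sq_sqrt ht.le
  have hsol := ycrit_sol σ t K r hσ ht hK hs
  set g : ℝ → ℝ := fun y =>
    s * Real.exp (r * t) * Real.exp (-((m - y) ^ 2) / 2) - K * Real.exp (-(y ^ 2) / 2)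
    with hg_def
  have halg : ∀ y : ℝ,
      (s * Real.exp (σ * y * Real.sqrt t + (r - σ ^ 2 / 2) * t) - K) * Real.exp (-(y ^ 2) / 2)
        = g y := by
    intro y
    have h1 : Real.exp (σ * y * Real.sqrt t + (r - σ ^ 2 / 2) * t) * Real.exp (-(y ^ 2) / 2)
        = Real.exp (r * t) * Real.exp (-((m - y) ^ 2) / 2) := by
      rw [← Real.exp_add, ← Real.exp_add]
      congr 1
      linear_combination (σ ^ 2 / 2) * hsq
    have hgy : g y = s * Real.exp (r * t) * Real.exp (-((m - y) ^ 2) / 2)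
        - K * Real.exp (-(y ^ 2) / 2) := rfl
    rw [hgy]
    linear_combination s * h1
  have hpoint : ∀ y : ℝ,
      max (s * Real.exp (σ * y * Real.sqrt t + (r - σ ^ 2 / 2) * t) - K) 0 *
        Real.exp (-(y ^ 2) / 2) = Set.indicator (Set.Ici yc) g y := by
    intro y
    by_cases hy : yc ≤ y
    · rw [Set.indicator_of_mem (Set.mem_Ici.mpr hy) g]
      have hmono : (σ * Real.sqrt t) * yc ≤ (σ * Real.sqrt t) * y :=
        mul_le_mul_of_nonneg_left hy hm.le
      have hge : K ≤ s * Real.exp (σ * y * Real.sqrt t + (r - σ ^ 2 / 2) * t) := by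
        rw [← hsol]
        have : Real.exp (σ * yc * Real.sqrt t + (r - σ ^ 2 / 2) * t)
            ≤ Real.exp (σ * y * Real.sqrt t + (r - σ ^ 2 / 2) * t) := by
          apply Real.exp_le_exp.2
          nlinarith [hmono]
        nlinarith [this, hs.le, Real.exp_pos (σ * yc * Real.sqrt t + (r - σ ^ 2 / 2) * t)]
      rw [max_eq_left (by linarith)]
      exact halg y
    · rw [Set.indicator_of_notMem (by simpa using hy) g]
      push_neg at hy
      have hmono : (σ * Real.sqrt t) * y < (σ * Real.sqrt t) * yc :=
        mul_lt_mul_of_pos_left hy hm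
      have hlt : s * Real.exp (σ * y * Real.sqrt t + (r - σ ^ 2 / 2) * t) < K := by
        rw [← hsol]
        have : Real.exp (σ * y * Real.sqrt t + (r - σ ^ 2 / 2) * t)
            < Real.exp (σ * yc * Real.sqrt t + (r - σ ^ 2 / 2) * t) := by
          apply Real.exp_lt_exp.2
          nlinarith [hmono]
        nlinarith [this, hs]
      rw [max_eq_right (by linarith), zero_mul]
  have hIA : IntegrableOn (fun y : ℝ => Real.exp (-((m - y) ^ 2) / 2)) (Set.Ioi yc) :=
    (integrable_gauss_shift m).integrableOn
  have hIB : IntegrableOn (fun y : ℝ => Real.exp (-(y ^ 2) / 2)) (Set.Ioi yc) :=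
    integrable_gauss.integrableOn
  have h1 : (∫ y : ℝ, max (s * Real.exp (σ * y * Real.sqrt t + (r - σ ^ 2 / 2) * t) - K) 0 *
      Real.exp (-(y ^ 2) / 2)) = ∫ y in Set.Ioi yc, g y := by
    calc (∫ y : ℝ, max (s * Real.exp (σ * y * Real.sqrt t + (r - σ ^ 2 / 2) * t) - K) 0 *
        Real.exp (-(y ^ 2) / 2))
        = ∫ y : ℝ, Set.indicator (Set.Ici yc) g y := by
          congr 1; funext y; exact hpoint y
      _ = ∫ y in Set.Ici yc, g y := integral_indicator measurableSet_Ici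
      _ = ∫ y in Set.Ioi yc, g y := (setIntegral_congr_set Ioi_ae_eq_Ici).symm
  have h2 : (∫ y in Set.Ioi yc, g y)
      = s * Real.exp (r * t) * (∫ y in Set.Ioi yc, Real.exp (-((m - y) ^ 2) / 2))
        - K * ∫ y in Set.Ioi yc, Real.exp (-(y ^ 2) / 2) := by
    rw [hg_def]
    rw [integral_sub (hIA.const_mul _) (hIB.const_mul _), integral_const_mul, integral_const_mul]
  have h3 := gauss_shift_integral m yc
  have h4 : (∫ y in Set.Ioi yc, Real.exp (-(y ^ 2) / 2))
      = ∫ z in Set.Iio (-yc), Real.exp (-(z ^ 2) / 2) := by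
    have h0 := gauss_shift_integral 0 yc
    simpa using h0
  unfold F
  rw [h1, h2, h3, h4]
  unfold stdNormalCDF
  ring

lemma stdNormalCDF_hasDerivAt (x : ℝ) :
    HasDerivAt stdNormalCDF ((Real.sqrt (2 * Real.pi))⁻¹ * Real.exp (-(x ^ 2) / 2)) x := by
  have hcont : Continuous fun z : ℝ => Real.exp (-(z ^ 2) / 2) := by continuity
  have hint := integrable_gauss
  have key : stdNormalCDF = fun y =>
      (Real.sqrt (2 * Real.pi))⁻¹ *
        ((∫ z in Set.Iic (0:ℝ), Real.exp (-(z ^ 2) / 2)) +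
          ∫ z in (0:ℝ)..y, Real.exp (-(z ^ 2) / 2)) := by
    funext y
    unfold stdNormalCDF
    congr 1
    have h2 := intervalIntegral.integral_Iic_sub_Iic (μ := volume)
      (hint.integrableOn) (hint.integrableOn) (a := (0:ℝ)) (b := y)
    rw [setIntegral_congr_set Iio_ae_eq_Iic]
    linarith
  have hd : HasDerivAt (fun y => ∫ z in (0:ℝ)..y, Real.exp (-(z ^ 2) / 2))
      (Real.exp (-(x ^ 2) / 2)) x :=
    intervalIntegral.integral_hasDerivAt_right (hint.intervalIntegrable)
      hcont.stronglyMeasurable.stronglyMeasurableAtFilter hcont.continuousAt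
  have h := ((hasDerivAt_const x
      (∫ z in Set.Iic (0:ℝ), Real.exp (-(z ^ 2) / 2))).add hd).const_mul
      ((Real.sqrt (2 * Real.pi))⁻¹)
  rw [key]
  simpa using h

/-- Black–Scholes delta / minimal hedge: `s ↦ F(t,s)` is differentiable on `(0,∞)` with
derivative `∂F/∂s(t,s) = e^{rt} Φ(σ√t − y(t,s)) = e^{rt} Φ((log(s/K) + t(r + σ²/2))/(σ√t))`. -/
theorem black_scholes_delta (σ t K r : ℝ) (hσ : 0 < σ) (ht : 0 < t) (hK : 0 < K) :
    ∀ s : ℝ, 0 < s →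
      HasDerivAt (fun s' => F σ r K t s')
        (Real.exp (r * t) * stdNormalCDF (σ * Real.sqrt t - ycrit σ r K t s)) s ∧
      Real.exp (r * t) * stdNormalCDF (σ * Real.sqrt t - ycrit σ r K t s) =
        Real.exp (r * t) *
          stdNormalCDF ((Real.log (s / K) + t * (r + σ ^ 2 / 2)) / (σ * Real.sqrt t)) := by
  intro s hs
  have hm : 0 < σ * Real.sqrt t := mul_pos hσ (Real.sqrt_pos.mpr ht)
  have hsq : Real.sqrt t ^ 2 = t := Real.sq_sqrt ht.le
  set m := σ * Real.sqrt t with hm_def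
  set c := (Real.sqrt (2 * Real.pi))⁻¹ with hc_def
  set L : ℝ → ℝ := fun s' => m⁻¹ * (Real.log K - Real.log s' - (r - σ ^ 2 / 2) * t) with hL_def
  have hLy : ∀ x : ℝ, 0 < x → L x = ycrit σ r K t x := by
    intro x hx
    rw [hL_def]
    unfold ycrit
    rw [Real.log_div hK.ne' hx.ne']
  have hLs := hLy s hs
  constructor
  · -- differentiability
    set G : ℝ → ℝ := fun s' =>
      s' * Real.exp (r * t) * stdNormalCDF (m - L s') - K * stdNormalCDF (-(L s')) with hG_def
    have hFG : (fun s' => F σ r K t s') =ᶠ[nhds s] G := by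
      filter_upwards [isOpen_Ioi.mem_nhds hs] with x hx
      have hx' : (0:ℝ) < x := hx
      rw [F_closed σ t K r hσ ht hK hx', hG_def]
      simp only [hLy x hx']
      rfl
    -- derivative of L
    have hu : HasDerivAt L (-(m⁻¹ * s⁻¹)) s := by
      have h1 := ((Real.hasDerivAt_log hs.ne').const_sub (Real.log K)).sub_const
        ((r - σ ^ 2 / 2) * t)
      have h2 := h1.const_mul m⁻¹
      rw [hL_def]
      rw [show -(m⁻¹ * s⁻¹) = m⁻¹ * -s⁻¹ by ring]
      exact h2
    -- derivative of the CDF compositions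
    have hmu : HasDerivAt (fun s' => m - L s') (m⁻¹ * s⁻¹) s := by
      have := hu.const_sub m
      rwa [neg_neg] at this
    have hnu : HasDerivAt (fun s' => -(L s')) (m⁻¹ * s⁻¹) s := by
      have := hu.neg
      rwa [neg_neg] at this
    have hPhi1 : HasDerivAt (fun s' => stdNormalCDF (m - L s'))
        (c * Real.exp (-((m - L s) ^ 2) / 2) * (m⁻¹ * s⁻¹)) s := by
      exact HasDerivAt.comp (h₂ := stdNormalCDF) s (stdNormalCDF_hasDerivAt (m - L s)) hmu
    have hPhi2 : HasDerivAt (fun s' => stdNormalCDF (-(L s')))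
        (c * Real.exp (-((-(L s)) ^ 2) / 2) * (m⁻¹ * s⁻¹)) s := by
      exact HasDerivAt.comp (h₂ := stdNormalCDF) s (stdNormalCDF_hasDerivAt (-(L s))) hnu
    have hfirst : HasDerivAt (fun s' => s' * Real.exp (r * t) * stdNormalCDF (m - L s'))
        (Real.exp (r * t) * stdNormalCDF (m - L s)
          + s * Real.exp (r * t) * (c * Real.exp (-((m - L s) ^ 2) / 2) * (m⁻¹ * s⁻¹))) s := by
      have hid : HasDerivAt (fun s' : ℝ => s' * Real.exp (r * t)) (Real.exp (r * t)) s := by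
        simpa using (hasDerivAt_id s).mul_const (Real.exp (r * t))
      exact hid.mul hPhi1
    have hsecond : HasDerivAt (fun s' => K * stdNormalCDF (-(L s')))
        (K * (c * Real.exp (-((-(L s)) ^ 2) / 2) * (m⁻¹ * s⁻¹))) s := hPhi2.const_mul K
    have hG : HasDerivAt G
        (Real.exp (r * t) * stdNormalCDF (m - L s)
          + s * Real.exp (r * t) * (c * Real.exp (-((m - L s) ^ 2) / 2) * (m⁻¹ * s⁻¹))
          - K * (c * Real.exp (-((-(L s)) ^ 2) / 2) * (m⁻¹ * s⁻¹))) s := hfirst.sub hsecond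
    -- cancellation
    have hsol := ycrit_sol σ t K r hσ ht hK hs
    have hcancel : s * Real.exp (r * t) * Real.exp (-((m - L s) ^ 2) / 2)
        = K * Real.exp (-((L s) ^ 2) / 2) := by
      rw [hLs]
      have h1 : Real.exp (σ * ycrit σ r K t s * Real.sqrt t + (r - σ ^ 2 / 2) * t) *
          Real.exp (-((ycrit σ r K t s) ^ 2) / 2)
          = Real.exp (r * t) * Real.exp (-((m - ycrit σ r K t s) ^ 2) / 2) := by
        rw [← Real.exp_add, ← Real.exp_add]
        congr 1
        linear_combination (σ ^ 2 / 2) * hsq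
      linear_combination Real.exp (-((ycrit σ r K t s) ^ 2) / 2) * hsol + (-s) * h1
    have hGD : HasDerivAt G (Real.exp (r * t) * stdNormalCDF (m - ycrit σ r K t s)) s := by
      convert hG using 1
      rw [← hLs]
      simp only [neg_sq]
      linear_combination (-(m⁻¹ * s⁻¹ * c)) * hcancel
    exact hGD.congr_of_eventuallyEq hFG
  · -- equality of the two expressions
    have harg : m - ycrit σ r K t s
        = (Real.log (s / K) + t * (r + σ ^ 2 / 2)) / m := by
      rw [hm_def]
      unfold ycrit
      rw [Real.log_div hs.ne' hK.ne', Real.log_div hK.ne' hs.ne',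
        eq_div_iff (mul_pos hσ (Real.sqrt_pos.mpr ht)).ne']
      field_simp
      linear_combination (2 * σ ^ 2) * hsq
    rw [harg]
end

section
/- (Optimal liquidation speed.) Let k > 0, α > 0, T > 0, and 𝒫 > 0 (the number of shares to be liquidated). For every measurable function ν : [0,T] → ℝ that is square-integrable on [0,T], the execution cost satisfies k ∫₀^T ν(t)² dt + α ( 𝒫 − ∫₀^T ν(t) dt )² ≥ k 𝒫² / (T + k/α), and equality holds for the constant liquidation speed ν*(t) = 𝒫 / (T + k/α). In particular, the constant strategy ν* minimizes the cost functional over all square-integrable strategies. -/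
open MeasureTheory intervalIntegral

/-- Optimal liquidation speed: for every measurable, square-integrable strategy
`ν : [0,T] → ℝ`, the execution cost `k∫₀^T ν² + α(P − ∫₀^T ν)²` is at least
`kP²/(T + k/α)`, with equality for the constant speed `ν*(t) = P/(T + k/α)`;
hence the constant strategy `ν*` minimizes the cost over square-integrable strategies. -/
theorem optimal_liquidation (k α T P : ℝ) (hk : 0 < k) (hα : 0 < α) (hT : 0 < T)
    (hP : 0 < P) :
    (∀ ν : ℝ → ℝ, Measurable ν →
      IntegrableOn (fun t => ν t ^ 2) (Set.Icc 0 T) →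
        k * P ^ 2 / (T + k / α) ≤
          k * (∫ t in (0 : ℝ)..T, ν t ^ 2) +
            α * (P - ∫ t in (0 : ℝ)..T, ν t) ^ 2) ∧
    (k * (∫ _t in (0 : ℝ)..T, (P / (T + k / α)) ^ 2) +
        α * (P - ∫ _t in (0 : ℝ)..T, P / (T + k / α)) ^ 2 =
      k * P ^ 2 / (T + k / α)) := by
  have hD : 0 < T + k / α := by positivity
  set c : ℝ := P / (T + k / α) with hc
  have hcD : c * (T + k / α) = P := by rw [hc]; exact div_mul_cancel₀ P hD.ne'
  constructor
  · intro ν hν hsq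
    -- ν is integrable on Icc 0 T
    have hνint : IntegrableOn ν (Set.Icc 0 T) := by
      have hbound : IntegrableOn (fun t => 1 + ν t ^ 2) (Set.Icc 0 T) :=
        (integrableOn_const measure_Icc_lt_top.ne).add hsq
      refine hbound.mono' (hν.aestronglyMeasurable.restrict) ?_
      filter_upwards with t
      rw [Real.norm_eq_abs]
      nlinarith [sq_abs (ν t), sq_nonneg (|ν t| - 1)]
    have h2sq : IntervalIntegrable (fun t => ν t ^ 2) volume 0 T :=
      (intervalIntegrable_iff_integrableOn_Ioc_of_le hT.le).mpr (hsq.mono_set Set.Ioc_subset_Icc_self)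
    have h2ν : IntervalIntegrable ν volume 0 T :=
      (intervalIntegrable_iff_integrableOn_Ioc_of_le hT.le).mpr (hνint.mono_set Set.Ioc_subset_Icc_self)
    set A : ℝ := ∫ t in (0:ℝ)..T, ν t ^ 2 with hA
    set B : ℝ := ∫ t in (0:ℝ)..T, ν t with hB
    have hkey : 0 ≤ A - 2 * c * B + c ^ 2 * T := by
      have hnn : 0 ≤ ∫ t in (0:ℝ)..T, (ν t - c) ^ 2 :=
        intervalIntegral.integral_nonneg hT.le (fun t _ => sq_nonneg _)
      have hexp : (∫ t in (0:ℝ)..T, (ν t - c) ^ 2)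
          = A - 2 * c * B + c ^ 2 * T := by
        have : (fun t => (ν t - c) ^ 2)
            = fun t => ν t ^ 2 - (2 * c) * ν t + c ^ 2 := by
          funext t; ring
        rw [this, intervalIntegral.integral_add, intervalIntegral.integral_sub h2sq
          (h2ν.const_mul _), intervalIntegral.integral_const_mul,
          intervalIntegral.integral_const]
        · simp [hA, hB]; ring
        · exact h2sq.sub (h2ν.const_mul _)
        · exact intervalIntegrable_const
      linarith [hexp ▸ hnn]
    have hsq1 : 0 ≤ (α * (P - B) - k * c) ^ 2 := sq_nonneg _
    have hkα : k * P ^ 2 / (T + k / α) = k * c ^ 2 * (T + k / α) := by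
      rw [hc]; field_simp
    rw [hkα]
    have hαne : α ≠ 0 := ne_of_gt hα
    have hz : α * P - c * (α * T + k) = 0 := by
      have := hcD
      field_simp [hc] at this ⊢
      linarith
    have hid : α * (k * A + α * (P - B) ^ 2) - k * c ^ 2 * (α * T + k)
        = α * k * (A - 2 * c * B + c ^ 2 * T) + (α * (P - B) - k * c) ^ 2
          + 2 * k * c * (α * P - c * (α * T + k)) := by ring
    rw [hz] at hid
    have h1 : α * (k * c ^ 2 * (T + k / α)) = k * c ^ 2 * (α * T + k) := by
      field_simp
    have hmul : α * (k * c ^ 2 * (T + k / α)) ≤ α * (k * A + α * (P - B) ^ 2) := by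
      rw [h1]
      nlinarith [mul_nonneg (mul_nonneg hα.le hk.le) hkey, hsq1]
    exact le_of_mul_le_mul_left hmul hα
  · rw [intervalIntegral.integral_const, intervalIntegral.integral_const]
    simp only [smul_eq_mul, sub_zero]
    rw [hc]; field_simp; ring
end
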